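/- Let $\nu$ be a finite measure on $\mathbb{R}^d$. Suppose there exist constants $c_0>0$, $\alpha\in(0,2)$, $\gamma\in[1,d]$, $\varepsilon>0$, a bounded nonincreasing doubling function $\bar{q}$, and $n\in\mathbb{N}$ such that $\nu^{n*}(B(x,r))\leq c_0^n r^{\gamma}(\varepsilon^{-\alpha}\bar{q}(\varepsilon))^{n-1}|x|^{-\alpha-\gamma}\bar{q}(|x|)$ for all $x\neq 0$ and $r\leq\max(\varepsilon/3,|x|/5^n)$, and also $|\nu|\leq c\varepsilon^{-\alpha}\bar{q}(\varepsilon)$ and $\bar{q}(r)/\bar{q}(R)\leq c(r/R)^{-\eta}$ for $0<r\leq R$. Then for all $x\in\mathbb{R}^d$ and all $r>0$ (including $r>|x|/5^n$): $\nu^{n*}(B(x,r))\leq C^n(\varepsilon^{-\alpha}\bar{q}(\varepsilon))^{n-1}r^{\gamma}\left(1+\frac{\varepsilon^{-\alpha}\bar{q}(\varepsilon)}{r^{-\alpha}\bar{q}(r)}\right)|x|^{-\alpha-\gamma}\bar{q}(|x|)$ for some constant $C$ depending only on $c_0,c,\alpha,\gamma,\eta$. -/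

import Mathlib

open MeasureTheory Set

/-- `n`-fold convolution power of a measure, with `ν^{0*} = δ₀`. -/
noncomputable def convPow {d : ℕ} (ν : Measure (EuclideanSpace ℝ (Fin d))) :
    ℕ → Measure (EuclideanSpace ℝ (Fin d))
  | 0 => Measure.dirac 0
  | n + 1 => Measure.map (fun p : _ × _ => p.1 + p.2) ((convPow ν n).prod ν)

lemma convPow_univ {d : ℕ} (ν : Measure (EuclideanSpace ℝ (Fin d))) [IsFiniteMeasure ν] :
    ∀ n, convPow ν n Set.univ = ν Set.univ ^ n
  | 0 => by simp [convPow]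
  | n+1 => by
    rw [convPow, Measure.map_apply (f := fun p : _ × _ => p.1 + p.2) (measurable_fst.add measurable_snd) MeasurableSet.univ,
        Set.preimage_univ, ← Set.univ_prod_univ, Measure.prod_prod, convPow_univ ν n, pow_succ]

set_option maxHeartbeats 1000000 in
/-- If `ν^{n*}(B(x,r)) ≤ c₀^n r^γ (ε^{-α} q(ε))^{n-1} |x|^{-α-γ} q(|x|)`
for all `x ≠ 0` and `r ≤ max(ε/3, |x|/5^n)`, `|ν| ≤ c ε^{-α} q(ε)`, and `q` has the
polynomial doubling bound `q(r)/q(R) ≤ c (r/R)^{-η}`, then for all `x ≠ 0` and ALL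
`r > 0`:
`ν^{n*}(B(x,r)) ≤ C^n (ε^{-α}q(ε))^{n-1} r^γ (1 + (ε^{-α}q(ε))/(r^{-α}q(r))) |x|^{-α-γ} q(|x|)`. -/
theorem stmt9 (d : ℕ) (hd : 1 ≤ d) (α γ η c₀ c ε : ℝ)
    (hα : α ∈ Set.Ioo (0:ℝ) 2) (hγ : γ ∈ Set.Icc (1:ℝ) d) (hη : 0 ≤ η)
    (hc₀ : 0 < c₀) (hc : 0 < c) (hε : 0 < ε)
    (ν : Measure (EuclideanSpace ℝ (Fin d))) [IsFiniteMeasure ν]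
    (q : ℝ → ℝ)
    (hqpos : ∀ s, 0 < s → 0 < q s)
    (hqbdd : ∃ B : ℝ, ∀ s, 0 < s → q s ≤ B)
    (hqmono : ∀ s t : ℝ, 0 < s → s ≤ t → q t ≤ q s)
    (hqpoly : ∀ r R : ℝ, 0 < r → r ≤ R → q r / q R ≤ c * (r / R) ^ (-η))
    (n : ℕ) (hn : 1 ≤ n)
    (hmass : ν Set.univ ≤ ENNReal.ofReal (c * ε ^ (-α) * q ε))
    (hyp : ∀ (x : EuclideanSpace ℝ (Fin d)) (r : ℝ), x ≠ 0 → 0 < r →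
      r ≤ max (ε / 3) (‖x‖ / 5 ^ n) →
      convPow ν n (Metric.ball x r) ≤
        ENNReal.ofReal (c₀ ^ n * r ^ γ * (ε ^ (-α) * q ε) ^ (n - 1)
          * ‖x‖ ^ (-α - γ) * q ‖x‖)) :
    ∃ C : ℝ, 0 < C ∧ ∀ (x : EuclideanSpace ℝ (Fin d)) (r : ℝ), x ≠ 0 → 0 < r →
      convPow ν n (Metric.ball x r) ≤
        ENNReal.ofReal (C ^ n * (ε ^ (-α) * q ε) ^ (n - 1) * r ^ γ
          * (1 + (ε ^ (-α) * q ε) / (r ^ (-α) * q r))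
          * ‖x‖ ^ (-α - γ) * q ‖x‖) := by
  obtain ⟨hα0, hα2⟩ := hα
  obtain ⟨hγ1, hγd⟩ := hγ
  have hqε : 0 < q ε := hqpos _ hε
  set M := max c 1 with hMdef
  have hM1 : (1:ℝ) ≤ M := le_max_right _ _
  have hM0 : (0:ℝ) < M := lt_of_lt_of_le one_pos hM1
  have hcM : c ≤ M := le_max_left _ _
  set a := γ + α with ha
  have ha0 : (0:ℝ) < a := by positivity
  clear_value M a
  have h5 : (0:ℝ) < 5 := by norm_num
  refine ⟨max c₀ (c * (5:ℝ) ^ (a + η) * M), lt_of_lt_of_le hc₀ (le_max_left _ _), ?_⟩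
  set C := max c₀ (c * (5:ℝ) ^ (a + η) * M) with hCdef
  have hC0 : 0 < C := lt_of_lt_of_le hc₀ (le_max_left _ _)
  clear_value C
  intro x r hx hr
  set X := ‖x‖ with hXdef
  have hX : 0 < X := norm_pos_iff.mpr hx
  have hqX : 0 < q X := hqpos _ hX
  have hqr : 0 < q r := hqpos _ hr
  set Q := ε ^ (-α) * q ε with hQdef
  have hQ : 0 < Q := mul_pos (Real.rpow_pos_of_pos hε _) hqε
  clear_value X Q
  have hrα : (0:ℝ) < r ^ (-α) := Real.rpow_pos_of_pos hr _
  have ht0 : 0 ≤ Q / (r ^ (-α) * q r) := by positivity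
  by_cases hcase : r ≤ max (ε/3) (X / 5 ^ n)
  · have hh := hyp x r hx hr (by rw [← hXdef]; exact hcase)
    rw [← hXdef] at hh
    refine hh.trans (ENNReal.ofReal_le_ofReal ?_)
    have hP : 0 ≤ r ^ γ * Q ^ (n-1) * X ^ (-α-γ) * q X := by positivity
    calc c₀ ^ n * r ^ γ * Q ^ (n-1) * X ^ (-α-γ) * q X
        = c₀ ^ n * (r ^ γ * Q ^ (n-1) * X ^ (-α-γ) * q X) := by ring
      _ ≤ (C ^ n * (1 + Q/(r^(-α)*q r))) * (r ^ γ * Q ^ (n-1) * X ^ (-α-γ) * q X) := by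
          refine mul_le_mul_of_nonneg_right ?_ hP
          calc c₀ ^ n ≤ C ^ n :=
                pow_le_pow_left₀ hc₀.le (by rw [hCdef]; exact le_max_left _ _) n
            _ = C ^ n * 1 := (mul_one _).symm
            _ ≤ C ^ n * (1 + Q/(r^(-α)*q r)) := by
                refine mul_le_mul_of_nonneg_left (by linarith) (by positivity)
      _ = C ^ n * Q ^ (n-1) * r ^ γ * (1 + Q/(r^(-α)*q r)) * X ^ (-α-γ) * q X := by ring
  · push_neg at hcase
    set b5 : ℝ := (5:ℝ) ^ n with hb5def
    have hb5 : (0:ℝ) < b5 := by positivity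
    clear_value b5
    have hb51 : (1:ℝ) ≤ b5 := by rw [hb5def]; exact one_le_pow₀ (by norm_num)
    have hrX : X / b5 ≤ r := ((le_max_right _ _).trans hcase.le)
    have hXrb : X ≤ r * b5 := by
      rw [div_le_iff₀ hb5] at hrX; linarith
    have hinv : b5⁻¹ ≤ r / X := by
      rw [inv_eq_one_div, div_le_div_iff₀ hb5 hX]; linarith
    -- bound q r ≤ M * b5^η * q X
    have hb5η1 : (1:ℝ) ≤ b5 ^ η := by
      calc (1:ℝ) = (1:ℝ) ^ η := (Real.one_rpow η).symm
        _ ≤ b5 ^ η := Real.rpow_le_rpow zero_le_one hb51 hη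
    have hqstep : q r ≤ M * b5 ^ η * q X := by
      rcases le_or_gt X r with h | h
      · have h1 : q r ≤ q X := hqmono X r hX h
        nlinarith [mul_le_mul hM1 hb5η1 zero_le_one hM0.le]
      · have h1 : q r / q X ≤ c * (r/X) ^ (-η) := hqpoly r X hr h.le
        have h2 : (r/X) ^ (-η) ≤ b5 ^ η := by
          rw [Real.rpow_neg (by positivity)]
          have h3 : (b5⁻¹) ^ η ≤ (r/X) ^ η := Real.rpow_le_rpow (by positivity) hinv hη
          have h4 : ((r/X) ^ η)⁻¹ ≤ ((b5⁻¹) ^ η)⁻¹ :=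
            inv_anti₀ (by positivity) h3
          calc ((r/X) ^ η)⁻¹ ≤ ((b5⁻¹) ^ η)⁻¹ := h4
            _ = b5 ^ η := by rw [Real.inv_rpow hb5.le, inv_inv]
        have h5 : q r / q X ≤ M * b5 ^ η := by
          calc q r / q X ≤ c * (r/X) ^ (-η) := h1
            _ ≤ M * b5 ^ η := mul_le_mul hcM h2 (by positivity) hM0.le
        rw [div_le_iff₀ hqX] at h5
        linarith [h5]
    -- lower bound pieces
    have hb5a : (0:ℝ) < b5 ^ a := by positivity
    have hb5e : (0:ℝ) < b5 ^ η := by positivity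
    have hqratio : (M * b5 ^ η)⁻¹ ≤ q X / q r := by
      rw [le_div_iff₀ hqr, inv_mul_le_iff₀ (by positivity)]
      linarith
    have hra : (b5 ^ a)⁻¹ ≤ (r / X) ^ a := by
      calc (b5 ^ a)⁻¹ = (b5⁻¹) ^ a := by rw [Real.inv_rpow hb5.le]
        _ ≤ (r / X) ^ a := Real.rpow_le_rpow (by positivity) hinv ha0.le
    -- measure bound by total mass
    have hmeas : convPow ν n (Metric.ball x r) ≤ ENNReal.ofReal ((c * Q) ^ n) := by
      calc convPow ν n (Metric.ball x r) ≤ convPow ν n Set.univ :=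
            measure_mono (Set.subset_univ _)
        _ = ν Set.univ ^ n := convPow_univ ν n
        _ ≤ (ENNReal.ofReal (c * ε ^ (-α) * q ε)) ^ n := pow_le_pow_left₀ (zero_le) hmass n
        _ = ENNReal.ofReal ((c * Q) ^ n) := by
            rw [← ENNReal.ofReal_pow (by positivity), hQdef, mul_assoc]
    refine hmeas.trans (ENNReal.ofReal_le_ofReal ?_)
    -- key rpow identity: (5^(a+η))^n = b5^a * b5^η
    have hE : ((5:ℝ) ^ (a + η)) ^ n = b5 ^ a * b5 ^ η := by
      rw [hb5def, ← Real.rpow_natCast ((5:ℝ) ^ (a+η)) n, ← Real.rpow_natCast (5:ℝ) n,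
        ← Real.rpow_mul h5.le, ← Real.rpow_mul h5.le, ← Real.rpow_mul h5.le,
        ← Real.rpow_add h5]
      ring_nf
    have hMn : M ≤ M ^ n := le_self_pow₀ hM1 (by omega)
    have hQn : Q ^ (n-1) * Q = Q ^ n := by
      rw [← pow_succ]; congr 1; omega
    -- the main chain
    have hT : C ^ n * Q ^ n * ((r/X) ^ a) * (q X / q r) ≤
        C ^ n * Q ^ (n-1) * r ^ γ * (1 + Q / (r ^ (-α) * q r)) * X ^ (-α-γ) * q X := by
      have hteq : C ^ n * Q ^ (n-1) * r ^ γ * (Q / (r ^ (-α) * q r)) * X ^ (-α-γ) * q X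
          = C ^ n * Q ^ n * ((r/X) ^ a) * (q X / q r) := by
        rw [Real.div_rpow hr.le hX.le, Real.rpow_neg hr.le,
          show (-α - γ : ℝ) = -a by rw [ha]; ring, Real.rpow_neg hX.le,
          ha, Real.rpow_add hr, ← hQn]
        have h1 : (0:ℝ) < r ^ α := Real.rpow_pos_of_pos hr _
        have h2 : (0:ℝ) < X ^ (γ + α) := Real.rpow_pos_of_pos hX _
        have h3 : (0:ℝ) < r ^ γ := Real.rpow_pos_of_pos hr _
        field_simp
      rw [← hteq]
      have hx2 : (0:ℝ) ≤ X ^ (-α-γ) := (Real.rpow_pos_of_pos hX _).le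
      have hr3 : (0:ℝ) ≤ r ^ γ := (Real.rpow_pos_of_pos hr _).le
      gcongr
      linarith
    refine le_trans ?_ hT
    -- final scalar inequality
    have hCge : (c * (5:ℝ) ^ (a + η) * M) ^ n ≤ C ^ n :=
      pow_le_pow_left₀ (by positivity) (by rw [hCdef]; exact le_max_right _ _) n
    calc (c * Q) ^ n = c ^ n * Q ^ n := mul_pow c Q n
      _ ≤ (c ^ n * (b5 ^ a * b5 ^ η) * M ^ n) * Q ^ n * ((b5 ^ a)⁻¹) * ((M * b5 ^ η)⁻¹) := by
          have heq : (c ^ n * (b5 ^ a * b5 ^ η) * M ^ n) * Q ^ n * ((b5 ^ a)⁻¹) * ((M * b5 ^ η)⁻¹)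
              = c ^ n * Q ^ n * (M ^ n / M) := by
            field_simp
          rw [heq]
          have h1 : (1:ℝ) ≤ M ^ n / M := (one_le_div hM0).mpr hMn
          calc c ^ n * Q ^ n = c ^ n * Q ^ n * 1 := (mul_one _).symm
            _ ≤ c ^ n * Q ^ n * (M ^ n / M) :=
                mul_le_mul_of_nonneg_left h1 (by positivity)
      _ = (c * (5:ℝ) ^ (a + η) * M) ^ n * Q ^ n * ((b5 ^ a)⁻¹) * ((M * b5 ^ η)⁻¹) := by
          rw [mul_pow, mul_pow, hE]
      _ ≤ C ^ n * Q ^ n * ((r/X) ^ a) * (q X / q r) := by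
          have hbase : (0:ℝ) ≤ (c * (5:ℝ) ^ (a + η) * M) ^ n * Q ^ n := by positivity
          gcongr
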